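/- For every finite simple graph G without isolated vertices and without open twins, G has an OTD-code and the OTD-number of G is at most the O-number of G plus one, i.e., γ^OTD(G) ≤ γ^O(G) + 1. -/

import Mathlib

open Finset

namespace SepDom

variable {V : Type*} [Fintype V] [DecidableEq V]

/-- The closed neighborhood `N[v]` of a vertex as a `Finset`. -/
def closedNbhd (G : SimpleGraph V) [DecidableRel G.Adj] (v : V) : Finset V :=
  insert v (G.neighborFinset v)

/-- `C` is a dominating set: `N[v] ∩ C ≠ ∅` for all `v`. -/
def IsDomSet (G : SimpleGraph V) [DecidableRel G.Adj] (C : Finset V) : Prop :=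
  ∀ v : V, (closedNbhd G v ∩ C).Nonempty

/-- `C` is a total-dominating set: `N(v) ∩ C ≠ ∅` for all `v`. -/
def IsTotalDomSet (G : SimpleGraph V) [DecidableRel G.Adj] (C : Finset V) : Prop :=
  ∀ v : V, (G.neighborFinset v ∩ C).Nonempty

/-- `C` is a locating set (L-set): the sets `N(v) ∩ C`, `v ∉ C`, are pairwise distinct. -/
def IsLSet (G : SimpleGraph V) [DecidableRel G.Adj] (C : Finset V) : Prop :=
  ∀ u ∉ C, ∀ v ∉ C, G.neighborFinset u ∩ C = G.neighborFinset v ∩ C → u = v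

/-- `C` is an open-separating set (O-set): the sets `N(v) ∩ C` are pairwise distinct. -/
def IsOSet (G : SimpleGraph V) [DecidableRel G.Adj] (C : Finset V) : Prop :=
  ∀ u v : V, G.neighborFinset u ∩ C = G.neighborFinset v ∩ C → u = v

/-- `C` is a closed-separating set (I-set): the sets `N[v] ∩ C` are pairwise distinct. -/
def IsISet (G : SimpleGraph V) [DecidableRel G.Adj] (C : Finset V) : Prop :=
  ∀ u v : V, closedNbhd G u ∩ C = closedNbhd G v ∩ C → u = v

/-- `C` is a full-separating set (F-set): both open- and closed-separating. -/
def IsFSet (G : SimpleGraph V) [DecidableRel G.Adj] (C : Finset V) : Prop :=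
  IsOSet G C ∧ IsISet G C

/-- `G` has open twins: distinct non-adjacent vertices with equal open neighborhoods. -/
def HasOpenTwins (G : SimpleGraph V) [DecidableRel G.Adj] : Prop :=
  ∃ u v : V, u ≠ v ∧ ¬ G.Adj u v ∧ G.neighborFinset u = G.neighborFinset v

/-- `G` has closed twins: distinct adjacent vertices with equal closed neighborhoods. -/
def HasClosedTwins (G : SimpleGraph V) [DecidableRel G.Adj] : Prop :=
  ∃ u v : V, u ≠ v ∧ G.Adj u v ∧ closedNbhd G u = closedNbhd G v

/-- `G` has an isolated vertex: a vertex with empty open neighborhood. -/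
def HasIsolated (G : SimpleGraph V) [DecidableRel G.Adj] : Prop :=
  ∃ v : V, G.neighborFinset v = ∅

/-- The L-number: minimum cardinality of an L-set. -/
noncomputable def lNum (G : SimpleGraph V) [DecidableRel G.Adj] : ℕ :=
  sInf {n | ∃ C : Finset V, IsLSet G C ∧ C.card = n}

/-- The O-number: minimum cardinality of an O-set. -/
noncomputable def oNum (G : SimpleGraph V) [DecidableRel G.Adj] : ℕ :=
  sInf {n | ∃ C : Finset V, IsOSet G C ∧ C.card = n}

/-- The I-number: minimum cardinality of an I-set. -/
noncomputable def iNum (G : SimpleGraph V) [DecidableRel G.Adj] : ℕ :=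
  sInf {n | ∃ C : Finset V, IsISet G C ∧ C.card = n}

/-- The F-number: minimum cardinality of an F-set. -/
noncomputable def fNum (G : SimpleGraph V) [DecidableRel G.Adj] : ℕ :=
  sInf {n | ∃ C : Finset V, IsFSet G C ∧ C.card = n}

/-- The LD-number: minimum cardinality of an LD-code. -/
noncomputable def ldNum (G : SimpleGraph V) [DecidableRel G.Adj] : ℕ :=
  sInf {n | ∃ C : Finset V, IsDomSet G C ∧ IsLSet G C ∧ C.card = n}

/-- The OD-number: minimum cardinality of an OD-code. -/
noncomputable def odNum (G : SimpleGraph V) [DecidableRel G.Adj] : ℕ :=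
  sInf {n | ∃ C : Finset V, IsDomSet G C ∧ IsOSet G C ∧ C.card = n}

/-- The ID-number: minimum cardinality of an ID-code. -/
noncomputable def idNum (G : SimpleGraph V) [DecidableRel G.Adj] : ℕ :=
  sInf {n | ∃ C : Finset V, IsDomSet G C ∧ IsISet G C ∧ C.card = n}

/-- The FD-number: minimum cardinality of an FD-code. -/
noncomputable def fdNum (G : SimpleGraph V) [DecidableRel G.Adj] : ℕ :=
  sInf {n | ∃ C : Finset V, IsDomSet G C ∧ IsFSet G C ∧ C.card = n}

/-- The LTD-number: minimum cardinality of an LTD-code. -/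
noncomputable def ltdNum (G : SimpleGraph V) [DecidableRel G.Adj] : ℕ :=
  sInf {n | ∃ C : Finset V, IsTotalDomSet G C ∧ IsLSet G C ∧ C.card = n}

/-- The OTD-number: minimum cardinality of an OTD-code. -/
noncomputable def otdNum (G : SimpleGraph V) [DecidableRel G.Adj] : ℕ :=
  sInf {n | ∃ C : Finset V, IsTotalDomSet G C ∧ IsOSet G C ∧ C.card = n}

/-- The ITD-number: minimum cardinality of an ITD-code. -/
noncomputable def itdNum (G : SimpleGraph V) [DecidableRel G.Adj] : ℕ :=
  sInf {n | ∃ C : Finset V, IsTotalDomSet G C ∧ IsISet G C ∧ C.card = n}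

/-- The FTD-number: minimum cardinality of an FTD-code. -/
noncomputable def ftdNum (G : SimpleGraph V) [DecidableRel G.Adj] : ℕ :=
  sInf {n | ∃ C : Finset V, IsTotalDomSet G C ∧ IsFSet G C ∧ C.card = n}

end SepDom

open SepDom

theorem otd_le_o_add_one {V : Type*} [Fintype V] [DecidableEq V]
    (G : SimpleGraph V) [DecidableRel G.Adj]
    (hIso : ¬ HasIsolated G) (hOT : ¬ HasOpenTwins G) :
    (∃ C : Finset V, IsTotalDomSet G C ∧ IsOSet G C) ∧ otdNum G ≤ oNum G + 1 := by
  classical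
  -- univ is an O-set
  have hOuniv : IsOSet G (Finset.univ : Finset V) := by
    intro u v h
    simp only [Finset.inter_univ] at h
    by_contra hne
    by_cases hadj : G.Adj u v
    · have hv : v ∈ G.neighborFinset u := by simpa using hadj
      rw [h] at hv
      simp at hv
    · exact hOT ⟨u, v, hne, hadj, h⟩
  have hTuniv : IsTotalDomSet G (Finset.univ : Finset V) := by
    intro v
    rw [Finset.inter_univ]
    exact Finset.nonempty_iff_ne_empty.mpr (fun h => hIso ⟨v, h⟩)
  refine ⟨⟨Finset.univ, hTuniv, hOuniv⟩, ?_⟩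
  have hne : {n | ∃ C : Finset V, IsOSet G C ∧ C.card = n}.Nonempty :=
    ⟨_, Finset.univ, hOuniv, rfl⟩
  obtain ⟨C, hC, hCcard⟩ := Nat.sInf_mem hne
  have hco : C.card = oNum G := hCcard
  by_cases hall : ∀ v : V, (G.neighborFinset v ∩ C).Nonempty
  · calc otdNum G ≤ C.card := Nat.sInf_le ⟨C, hall, hC, rfl⟩
      _ ≤ oNum G + 1 := by omega
  · push_neg at hall
    obtain ⟨v₀, hv₀⟩ := hall
    have hNv₀ : (G.neighborFinset v₀).Nonempty :=
      Finset.nonempty_iff_ne_empty.mpr (fun h => hIso ⟨v₀, h⟩)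
    obtain ⟨w, hw⟩ := hNv₀
    have hsub : C ⊆ insert w C := Finset.subset_insert _ _
    have hO' : IsOSet G (insert w C) := by
      intro u v h
      apply hC u v
      have h2 := congrArg (· ∩ C) h
      simpa [Finset.inter_assoc, Finset.inter_eq_right.mpr hsub] using h2
    have hTD : IsTotalDomSet G (insert w C) := by
      intro v
      by_cases hv : (G.neighborFinset v ∩ C).Nonempty
      · exact hv.mono (Finset.inter_subset_inter le_rfl hsub)
      · rw [Finset.not_nonempty_iff_eq_empty] at hv
        have : v = v₀ := hC v v₀ (by rw [hv, hv₀])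
        subst this
        exact ⟨w, Finset.mem_inter.mpr ⟨hw, Finset.mem_insert_self _ _⟩⟩
    calc otdNum G ≤ (insert w C).card := Nat.sInf_le ⟨insert w C, hTD, hO', rfl⟩
      _ ≤ C.card + 1 := Finset.card_insert_le _ _
      _ ≤ oNum G + 1 := by omega
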